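/- Let p be a prime, n a positive natural number, and m = p^n. Let A be the m×m Jordan block over ZMod p with eigenvalue 1, i.e., A = 1 + J where J is the matrix with entries J i j = 1 when j = i+1 and 0 otherwise. Then ∑_{k=0}^{p^n - 1} A^k equals the matrix E having a single entry 1 in position (0, m-1) (the top-right corner) and 0 elsewhere; equivalently, ∑_{k=0}^{p^n - 1} A^k = J^(p^n - 1) = stdBasisMatrix 0 (m-1) 1. -/

import Mathlib

/-- The nilpotent upper-triangular Jordan block: entry `(i,j)` is `1` if `j = i + 1`
and `0` otherwise. -/
def jordanNilp (p m : ℕ) : Matrix (Fin m) (Fin m) (ZMod p) :=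
  Matrix.of fun i j => if (j : ℕ) = (i : ℕ) + 1 then 1 else 0

lemma jordanNilp_pow (p m k : ℕ) :
    (jordanNilp p m) ^ k
      = Matrix.of fun i j : Fin m => if (j : ℕ) = (i : ℕ) + k then 1 else 0 := by
  induction k with
  | zero =>
    ext i j
    simp [Matrix.one_apply, Fin.ext_iff, eq_comm]
  | succ k ih =>
    ext i j
    rw [pow_succ, ih]
    simp only [Matrix.mul_apply, Matrix.of_apply, jordanNilp]
    by_cases h : (j : ℕ) = (i : ℕ) + k + 1
    · have hik : (i : ℕ) + k < m := by have := j.isLt; omega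
      rw [Finset.sum_eq_single (⟨(i : ℕ) + k, hik⟩ : Fin m)]
      · simp [h, Nat.add_assoc]
      · intro b _ hb
        have hb' : (b : ℕ) ≠ (i : ℕ) + k := by simpa [Fin.ext_iff] using hb
        simp [hb']
      · simp
    · have h' : ¬(j : ℕ) = (i : ℕ) + (k + 1) := by omega
      rw [if_neg h']
      apply Finset.sum_eq_zero
      intro l _
      by_cases hl : (l : ℕ) = (i : ℕ) + k
      · have : (j : ℕ) ≠ (l : ℕ) + 1 := by omega
        simp [this]
      · simp [hl]

theorem sum_powers_jordan_block_eq_corner (p n m : ℕ) [Fact p.Prime]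
    (hn : 0 < n) (hm : m = p ^ n) (hm0 : 0 < m)
    (A : Matrix (Fin m) (Fin m) (ZMod p)) (hA : A = 1 + jordanNilp p m) :
    ∑ k ∈ Finset.range (p ^ n), A ^ k = (jordanNilp p m) ^ (p ^ n - 1) ∧
    ∑ k ∈ Finset.range (p ^ n), A ^ k
      = Matrix.single (⟨0, hm0⟩ : Fin m)
          (⟨m - 1, Nat.sub_lt hm0 one_pos⟩ : Fin m) (1 : ZMod p) := by
  have hp1 : 0 < p ^ n := hm ▸ hm0
  -- polynomial identity
  have hpoly : (∑ k ∈ Finset.range (p ^ n), (Polynomial.X + 1 : Polynomial (ZMod p)) ^ k)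
      = Polynomial.X ^ (p ^ n - 1) := by
    have h1 := geom_sum_mul (Polynomial.X + 1 : Polynomial (ZMod p)) (p ^ n)
    have h2 : (Polynomial.X + 1 : Polynomial (ZMod p)) ^ (p ^ n)
        = Polynomial.X ^ (p ^ n) + 1 := by
      rw [add_pow_char_pow, one_pow]
    rw [add_sub_cancel_right, h2, add_sub_cancel_right] at h1
    have h3 : (Polynomial.X : Polynomial (ZMod p)) ^ (p ^ n)
        = Polynomial.X ^ (p ^ n - 1) * Polynomial.X := by
      rw [← pow_succ]
      congr 1
      omega
    rw [h3] at h1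
    exact mul_right_cancel₀ Polynomial.X_ne_zero h1
  have key : ∑ k ∈ Finset.range (p ^ n), A ^ k = (jordanNilp p m) ^ (p ^ n - 1) := by
    have := congrArg (Polynomial.aeval (jordanNilp p m)) hpoly
    simpa [map_sum, map_pow, map_add, hA, add_comm] using this
  refine ⟨key, ?_⟩
  rw [key, jordanNilp_pow]
  ext i j
  have hi := i.isLt
  have hj := j.isLt
  rw [Matrix.single]
  simp only [Matrix.of_apply]
  by_cases h : (j : ℕ) = (i : ℕ) + (p ^ n - 1)
  · have h1 : (⟨0, hm0⟩ : Fin m) = i ∧ (⟨m - 1, Nat.sub_lt hm0 one_pos⟩ : Fin m) = j := by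
      constructor <;> · apply Fin.ext; simp; omega
    rw [if_pos h, if_pos h1]
  · have h1 : ¬((⟨0, hm0⟩ : Fin m) = i ∧ (⟨m - 1, Nat.sub_lt hm0 one_pos⟩ : Fin m) = j) := by
      rintro ⟨hi', hj'⟩
      apply h
      have : (i : ℕ) = 0 := by rw [← hi']
      have : (j : ℕ) = m - 1 := by rw [← hj']
      omega
    rw [if_neg h, if_neg h1]
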